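/- Let (W,S) be a Coxeter system with length function ℓ and Bruhat order ≤. Let d be an integer, let m : W → ℤ[q,q^{-1}] be a function with finite support, and let P : W × W → ℤ[q] be a family of polynomials such that P(w,w) = 1 for all w, P(x,w) = 0 unless x ≤ w, and deg_q P(x,w) < (ℓ(w) − ℓ(x))/2 whenever x < w. Define Tr : W → ℤ[q,q^{-1}] by Tr(x) = Σ_{w ≥ x} (−1)^{ℓ(w)} m(w) P(x,w). Then for any fixed x ∈ W, the following are equivalent: (1) for all w ≥ x, Tr(w) is a polynomial in q of degree at most d − ℓ(w); (2) for all w ≥ x, m(w) is a polynomial in q of degree at most d − ℓ(w). -/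

import Mathlib

open LaurentPolynomial

variable {B W : Type*} [Group W] {M : CoxeterMatrix B}

/-- The Bruhat order on a Coxeter group: `x ≤ w` iff some reduced word for `w` contains a
subword (sublist) that is a reduced word for `x`. -/
def bruhatLE (cs : CoxeterSystem M W) (x w : W) : Prop :=
  ∃ ω : List B, cs.IsReduced ω ∧ cs.wordProd ω = w ∧
    ∃ ω' : List B, ω'.Sublist ω ∧ cs.IsReduced ω' ∧ cs.wordProd ω' = x

/-- The strict Bruhat order. -/
def bruhatLT (cs : CoxeterSystem M W) (x w : W) : Prop :=
  bruhatLE cs x w ∧ x ≠ w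

namespace BruhatAux

open List

open scoped Classical

variable (cs : CoxeterSystem M W)

local prefix:100 "s" => cs.simple
local prefix:100 "π" => cs.wordProd
local prefix:100 "ℓ" => cs.length
local prefix:100 "ris" => cs.rightInvSeq

/-- underlying map of the sign representation generator -/
noncomputable def etaFun (i : B) (p : W × ℤˣ) : W × ℤˣ :=
  (s i * p.1 * s i, if p.1 = s i then -p.2 else p.2)

theorem etaFun_invol (i : B) (p : W × ℤˣ) : etaFun cs i (etaFun cs i p) = p := by
  obtain ⟨t, ε⟩ := p
  have hconj : s i * (s i * t * s i) * s i = t := by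
    have h1 := cs.simple_mul_simple_cancel_left (i := i) (w := t * s i)
    calc s i * (s i * t * s i) * s i = (s i * (s i * (t * s i))) * s i := by group
    _ = t * s i * s i := by rw [h1]
    _ = t := cs.simple_mul_simple_cancel_right i
  have hiff : (s i * t * s i = s i) ↔ (t = s i) := by
    constructor
    · intro hc
      have := congrArg (fun u => s i * u * s i) hc
      rw [hconj] at this
      rw [this]
      calc s i * s i * s i = 1 * s i := by rw [cs.simple_mul_simple_self]
      _ = s i := one_mul _
    · intro h
      rw [h]
      calc s i * s i * s i = 1 * s i := by rw [cs.simple_mul_simple_self]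
      _ = s i := one_mul _
  unfold etaFun
  simp only
  by_cases h : t = s i
  · simp [hconj, hiff, h]
  · simp [hconj, hiff, h]

/-- The sign representation generator. -/
noncomputable def eta (i : B) : Equiv.Perm (W × ℤˣ) where
  toFun := etaFun cs i
  invFun := etaFun cs i
  left_inv := etaFun_invol cs i
  right_inv := etaFun_invol cs i

theorem eta_apply (i : B) (t : W) (ε : ℤˣ) :
    eta cs i (t, ε) = (s i * t * s i, if t = s i then -ε else ε) := rfl


theorem conj_eq_iff (g a b : W) : g * a * g⁻¹ = b ↔ a = g⁻¹ * b * g := by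
  constructor
  · intro h; rw [← h]; group
  · intro h; rw [h]; group

noncomputable def sgn (i j : B) (n : ℕ) (t : W) : ℤˣ :=
  ∏ k ∈ Finset.range n, (if t = s j * (s i * s j) ^ k then (-1 : ℤˣ) else 1)

theorem sj_conj_base (i j : B) : s j * (s i * s j) * s j = (s i * s j)⁻¹ := by
  have : s j * (s i * s j) * s j = s j * s i * (s j * s j) := by group
  rw [this, cs.simple_mul_simple_self, mul_one, mul_inv_rev, cs.inv_simple, cs.inv_simple]

theorem sj_conj_pow (i j : B) (k : ℕ) :
    s j * (s i * s j) ^ k * s j = ((s i * s j) ^ k)⁻¹ := by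
  induction k with
  | zero => simp [cs.simple_mul_simple_self]
  | succ n ih =>
    rw [pow_succ]
    have h1 : s j * ((s i * s j) ^ n * (s i * s j)) * s j
        = (s j * (s i * s j) ^ n * s j) * (s j * (s i * s j) * s j) := by
      have : (s j * (s i * s j) ^ n * s j) * (s j * (s i * s j) * s j)
          = s j * (s i * s j) ^ n * (s j * s j) * (s i * s j) * s j := by group
      rw [this, cs.simple_mul_simple_self]
      group
    rw [h1, ih, sj_conj_base cs]
    rw [← pow_succ, pow_succ']
    simp [mul_inv_rev, mul_assoc]

theorem pow_conj_sj (i j : B) (k : ℕ) :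
    ((s i * s j) ^ k)⁻¹ * s j * (s i * s j) ^ k = s j * (s i * s j) ^ (2 * k) := by
  calc ((s i * s j) ^ k)⁻¹ * s j * (s i * s j) ^ k
      = (s j * (s i * s j) ^ k * s j) * s j * (s i * s j) ^ k := by rw [sj_conj_pow cs]
    _ = s j * (s i * s j) ^ k * ((s j * s j) * (s i * s j) ^ k) := by group
    _ = s j * ((s i * s j) ^ k * (s i * s j) ^ k) := by
        rw [cs.simple_mul_simple_self, one_mul]; group
    _ = s j * (s i * s j) ^ (2 * k) := by rw [two_mul, pow_add]

theorem etaPow_apply (i j : B) (n : ℕ) (t : W) (ε : ℤˣ) :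
    ((eta cs i * eta cs j) ^ n) (t, ε) =
      ((s i * s j) ^ n * t * ((s i * s j) ^ n)⁻¹, sgn cs i j (2 * n) t * ε) := by
  induction n with
  | zero => simp [sgn]
  | succ n ih =>
    rw [pow_succ', Equiv.Perm.mul_apply, ih, Equiv.Perm.mul_apply, eta_apply, eta_apply]
    have hcoord : s i * (s j * ((s i * s j) ^ n * t * ((s i * s j) ^ n)⁻¹) * s j) * s i
        = (s i * s j) ^ (n+1) * t * ((s i * s j) ^ (n+1))⁻¹ := by
      rw [pow_succ']
      simp only [mul_inv_rev, cs.inv_simple]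
      group
    have hc1 : ((s i * s j) ^ n * t * ((s i * s j) ^ n)⁻¹ = s j)
        ↔ (t = s j * (s i * s j) ^ (2 * n)) := by
      rw [conj_eq_iff, pow_conj_sj cs]
    have hc2 : (s j * ((s i * s j) ^ n * t * ((s i * s j) ^ n)⁻¹) * s j = s i)
        ↔ (t = s j * (s i * s j) ^ (2 * n + 1)) := by
      have e1 : s j * ((s i * s j) ^ n * t * ((s i * s j) ^ n)⁻¹) * s j
          = (s j * (s i * s j) ^ n) * t * (s j * (s i * s j) ^ n)⁻¹ := by
        simp only [mul_inv_rev, cs.inv_simple]; group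
      rw [e1, conj_eq_iff]
      have e2 : (s j * (s i * s j) ^ n)⁻¹ * s i * (s j * (s i * s j) ^ n)
          = s j * (s i * s j) ^ (2 * n + 1) := by
        have hcomm : (s i * s j) ^ n * (s i * s j) = (s i * s j) * (s i * s j) ^ n := by
          rw [← pow_succ, ← pow_succ']
        have key : ((s i * s j) ^ n)⁻¹ * s j * (s i * s j) ^ n
            = s j * ((s i * s j) ^ n * (s i * s j) ^ n) := by
          rw [pow_conj_sj cs, two_mul, pow_add]
        have hexp : (s i * s j) ^ (2 * n + 1)
            = (s i * s j) ^ n * (s i * s j) ^ n * (s i * s j) := by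
          rw [pow_succ, two_mul, pow_add]
        rw [hexp, mul_inv_rev, cs.inv_simple]
        generalize hP : (s i * s j) ^ n = P at key hcomm ⊢
        have hconj : P⁻¹ * (s i * s j) * P = s i * s j := by
          rw [mul_assoc, ← hcomm, ← mul_assoc, inv_mul_cancel, one_mul]
        calc P⁻¹ * s j * s i * (s j * P)
            = (P⁻¹ * s j * P) * (P⁻¹ * (s i * s j) * P) := by group
          _ = (s j * (P * P)) * (s i * s j) := by rw [key, hconj]
          _ = s j * (P * P * (s i * s j)) := by group
      rw [e2]
    have hsgn : sgn cs i j (2 * (n + 1)) t = sgn cs i j (2 * n) t *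
        (if t = s j * (s i * s j) ^ (2*n) then (-1:ℤˣ) else 1) *
        (if t = s j * (s i * s j) ^ (2*n+1) then (-1:ℤˣ) else 1) := by
      have h2 : 2 * (n + 1) = (2 * n) + 1 + 1 := by ring
      rw [h2, sgn, Finset.prod_range_succ, Finset.prod_range_succ, ← sgn]
    rw [Prod.ext_iff]
    refine ⟨hcoord, ?_⟩
    show (if (s j * ((s i * s j) ^ n * t * ((s i * s j) ^ n)⁻¹) * s j) = s i
        then -(if ((s i * s j) ^ n * t * ((s i * s j) ^ n)⁻¹) = s j
               then -(sgn cs i j (2 * n) t * ε) else sgn cs i j (2 * n) t * ε)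
        else (if ((s i * s j) ^ n * t * ((s i * s j) ^ n)⁻¹) = s j
               then -(sgn cs i j (2 * n) t * ε) else sgn cs i j (2 * n) t * ε))
      = sgn cs i j (2 * (n + 1)) t * ε
    rw [hsgn, hc1, hc2]
    by_cases h1 : t = s j * (s i * s j) ^ (2*n) <;>
      by_cases h2 : t = s j * (s i * s j) ^ (2*n+1) <;>
      simp only [h1, h2, if_true, if_false, if_pos, if_neg, not_false_iff] <;>
      simp [h1, h2] <;> ring

theorem eta_liftable : M.IsLiftable (fun i => eta cs i) := by
  intro i j
  apply Equiv.ext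
  rintro ⟨t, ε⟩
  show ((eta cs i * eta cs j) ^ M.M i j) (t, ε) = (t, ε)
  rw [etaPow_apply]
  have hpm : (s i * s j) ^ M.M i j = 1 := cs.simple_mul_simple_pow i j
  have hsgn : sgn cs i j (2 * M.M i j) t = 1 := by
    have h2 : 2 * M.M i j = M.M i j + M.M i j := by ring
    rw [sgn, h2, Finset.prod_range_add]
    have heq : ∀ k ∈ Finset.range (M.M i j),
        (if t = s j * (s i * s j) ^ (M.M i j + k) then (-1:ℤˣ) else 1)
        = (if t = s j * (s i * s j) ^ k then (-1:ℤˣ) else 1) := by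
      intro k _
      rw [pow_add, hpm, one_mul]
    rw [Finset.prod_congr rfl heq, ← sgn]
    exact Int.units_mul_self _
  rw [hpm, hsgn]
  simp

/-- The sign representation. -/
noncomputable def phi : W →* Equiv.Perm (W × ℤˣ) :=
  cs.lift ⟨fun i => eta cs i, eta_liftable cs⟩

theorem phi_simple (i : B) : phi cs (s i) = eta cs i :=
  cs.lift_apply_simple (eta_liftable cs) i

theorem phi_wordProd (ω : List B) (t : W) (ε : ℤˣ) :
    phi cs (π ω) (t, ε) =
      ((π ω) * t * (π ω)⁻¹, (-1 : ℤˣ) ^ ((ris ω).count t) * ε) := by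
  induction ω generalizing ε with
  | nil => simp [cs.wordProd_nil]
  | cons i ω ih =>
    rw [cs.wordProd_cons, map_mul, Equiv.Perm.mul_apply, ih, phi_simple, eta_apply]
    have hconj : s i * ((π ω) * t * (π ω)⁻¹) * s i
        = (s i * π ω) * t * (s i * π ω)⁻¹ := by
      rw [mul_inv_rev, cs.inv_simple]; group
    have hcond : ((π ω) * t * (π ω)⁻¹ = s i) ↔ (t = (π ω)⁻¹ * s i * (π ω)) := conj_eq_iff _ _ _
    have hris : ris (i :: ω) = ((π ω)⁻¹ * s i * (π ω)) :: ris ω := rfl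
    rw [Prod.ext_iff]
    refine ⟨hconj, ?_⟩
    show (if (π ω) * t * (π ω)⁻¹ = s i
        then -((-1 : ℤˣ) ^ ((ris ω).count t) * ε)
        else (-1 : ℤˣ) ^ ((ris ω).count t) * ε)
      = (-1 : ℤˣ) ^ ((ris (i :: ω)).count t) * ε
    rw [hris, List.count_cons, hcond]
    by_cases h : t = (π ω)⁻¹ * s i * (π ω)
    · simp [h, pow_succ]
    · have hne : ¬ ((π ω)⁻¹ * s i * (π ω) = t) := fun hc => h hc.symm
      simp [h, hne, beq_iff_eq]

theorem count_parity (ω₁ ω₂ : List B) (h : π ω₁ = π ω₂) (t : W) :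
    (-1 : ℤˣ) ^ ((ris ω₁).count t) = (-1 : ℤˣ) ^ ((ris ω₂).count t) := by
  have h1 := phi_wordProd cs ω₁ t 1
  have h2 := phi_wordProd cs ω₂ t 1
  rw [h] at h1
  rw [h1] at h2
  have := (Prod.ext_iff.mp h2).2
  simpa using this

theorem phi_reflection_apply_self (t : W) (ht : cs.IsReflection t) (ε : ℤˣ) :
    phi cs t (t, ε) = (t, -ε) := by
  obtain ⟨v, i, rfl⟩ := ht
  obtain ⟨ν, -, hv⟩ := cs.exists_reduced_word' v
  set t := v * s i * v⁻¹ with hts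
  have hphi_v : ∀ (a : W) (δ : ℤˣ), phi cs v (a, δ) =
      (v * a * v⁻¹, (-1 : ℤˣ) ^ ((ris ν).count a) * δ) := by
    intro a δ; rw [hv]; exact phi_wordProd cs ν a δ
  have hphi_vinv : ∀ (a : W) (δ : ℤˣ), phi cs v⁻¹ (a, δ) =
      (v⁻¹ * a * v, (-1 : ℤˣ) ^ ((ris ν.reverse).count a) * δ) := by
    intro a δ
    have : v⁻¹ = π ν.reverse := by rw [hv, cs.wordProd_reverse]
    rw [this]
    have := phi_wordProd cs ν.reverse a δ
    rw [this, ← this]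
    rw [phi_wordProd cs ν.reverse a δ]
    congr 1
    rw [cs.wordProd_reverse, ← hv, inv_inv]
  have hinvt : v⁻¹ * t * v = s i := by rw [hts]; group
  have hcomp : phi cs v (phi cs v⁻¹ (t, ε)) = (t, ε) := by
    have : phi cs v * phi cs v⁻¹ = 1 := by rw [← map_mul, mul_inv_cancel, map_one]
    calc phi cs v (phi cs v⁻¹ (t, ε)) = (phi cs v * phi cs v⁻¹) (t, ε) := rfl
      _ = (t, ε) := by rw [this]; rfl
  rw [hphi_vinv t ε, hinvt] at hcomp
  rw [hphi_v (s i) _] at hcomp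
  have hsign : (-1 : ℤˣ) ^ ((ris ν).count (s i)) *
      ((-1 : ℤˣ) ^ ((ris ν.reverse).count t) * ε) = ε := (Prod.ext_iff.mp hcomp).2
  have hdecomp : phi cs t = phi cs v * phi cs (s i) * phi cs v⁻¹ := by
    rw [← map_mul, ← map_mul]
  rw [hdecomp]
  show phi cs v (phi cs (s i) (phi cs v⁻¹ (t, ε))) = (t, -ε)
  rw [hphi_vinv t ε, hinvt, phi_simple, eta_apply]
  rw [if_pos rfl]
  have hsss : s i * s i * s i = s i := by
    rw [cs.simple_mul_simple_self, one_mul]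
  rw [hsss, hphi_v (s i) _]
  have hcoord : v * s i * v⁻¹ = t := hts.symm
  rw [Prod.ext_iff]
  refine ⟨hcoord, ?_⟩
  show (-1 : ℤˣ) ^ ((ris ν).count (s i)) *
      (-((-1 : ℤˣ) ^ ((ris ν.reverse).count t) * ε)) = -ε
  rw [mul_neg, hsign]

theorem count_odd_of_reflection_word (τ : List B) (t : W) (ht : cs.IsReflection t)
    (hτ : π τ = t) : (-1 : ℤˣ) ^ ((ris τ).count t) = -1 := by
  have h1 := phi_wordProd cs τ t 1
  rw [hτ] at h1
  rw [phi_reflection_apply_self cs t ht 1] at h1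
  have := (Prod.ext_iff.mp h1).2
  simp only [mul_one] at this
  exact this.symm

theorem ris_append (A₁ A₂ : List B) :
    cs.rightInvSeq (A₁ ++ A₂) =
      (cs.rightInvSeq A₁).map (fun x => (π A₂)⁻¹ * x * (π A₂)) ++ cs.rightInvSeq A₂ := by
  induction A₁ with
  | nil => simp
  | cons a A ih =>
    have h1 : cs.rightInvSeq ((a :: A) ++ A₂)
        = (π (A ++ A₂))⁻¹ * s a * π (A ++ A₂) :: cs.rightInvSeq (A ++ A₂) := rfl
    have h2 : cs.rightInvSeq (a :: A) = (π A)⁻¹ * s a * (π A) :: cs.rightInvSeq A := rfl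
    rw [h1, h2, ih]
    simp only [List.map_cons, List.cons_append]
    congr 1
    rw [cs.wordProd_append, mul_inv_rev]
    group

theorem strong_exchange {ω : List B} {t : W} (ht : cs.IsReflection t)
    (hl : ℓ (π ω * t) < ℓ (π ω)) : t ∈ cs.rightInvSeq ω := by
  obtain ⟨μ, hμred, hμ⟩ := cs.exists_reduced_word' (π ω * t)
  obtain ⟨v, i, htvi⟩ := ht
  obtain ⟨ν, -, hν⟩ := cs.exists_reduced_word' v
  have ht' : cs.IsReflection t := ⟨v, i, htvi⟩
  set τ : List B := ν ++ ([i] ++ ν.reverse) with hτ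
  have hπτ : π τ = t := by
    rw [hτ, cs.wordProd_append, cs.wordProd_append, cs.wordProd_singleton,
      cs.wordProd_reverse, ← hν, htvi]
    group
  have hword : π (μ ++ τ) = π ω := by
    rw [cs.wordProd_append, ← hμ, hπτ, mul_assoc, ht'.mul_self, mul_one]
  have hparity := count_parity cs (μ ++ τ) ω hword t
  have happ := ris_append cs μ τ
  have hf : Function.Injective (fun x : W => (π τ)⁻¹ * x * (π τ)) := by
    intro a b hab
    simp only at hab
    have := congrArg (fun y => (π τ) * y * (π τ)⁻¹) hab
    simpa [mul_assoc] using this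
  have hft : (fun x : W => (π τ)⁻¹ * x * (π τ)) t = t := by
    simp only [hπτ, ht'.inv]
    rw [ht'.mul_self, one_mul]
  have hmapcount : ((cs.rightInvSeq μ).map (fun x => (π τ)⁻¹ * x * (π τ))).count t
      = (cs.rightInvSeq μ).count t := by
    conv_lhs => rw [← hft]
    exact List.count_map_of_injective _ _ hf t
  have hnotmem : t ∉ cs.rightInvSeq μ := by
    intro hmem
    have hinv := cs.isRightInversion_of_mem_rightInvSeq hμred hmem
    have : ℓ (π μ * t) < ℓ (π μ) := hinv.2
    rw [← hμ] at this
    rw [mul_assoc, ht'.mul_self, mul_one] at this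
    omega
  have hcount0 : (cs.rightInvSeq μ).count t = 0 := List.count_eq_zero.mpr hnotmem
  have hodd := count_odd_of_reflection_word cs τ t ht' hπτ
  by_contra hmem
  have hcountω : (cs.rightInvSeq ω).count t = 0 := List.count_eq_zero.mpr hmem
  rw [hcountω, pow_zero] at hparity
  rw [happ, List.count_append, hmapcount, hcount0, zero_add, hodd] at hparity
  exact absurd hparity (by decide)

theorem strong_exchange' {ω : List B} {t : W} (ht : cs.IsReflection t)
    (hl : ℓ (π ω * t) < ℓ (π ω)) :
    ∃ j < ω.length, π (ω.eraseIdx j) = π ω * t := by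
  have hmem := strong_exchange cs ht hl
  obtain ⟨j, hj, hget⟩ := List.mem_iff_getElem.mp hmem
  rw [cs.length_rightInvSeq] at hj
  refine ⟨j, hj, ?_⟩
  have hgetD : (cs.rightInvSeq ω).getD j 1 = t := by
    rw [List.getD_eq_getElem _ _ (by rw [cs.length_rightInvSeq]; exact hj)]
    exact hget
  rw [← cs.wordProd_mul_getD_rightInvSeq ω j, hgetD]

/-- Deletion property: every word has a reduced sublist with the same product. -/
theorem exists_reduced_sublist : ∀ (n : ℕ) (ω : List B), ω.length ≤ n →
    ∃ ω', ω'.Sublist ω ∧ cs.IsReduced ω' ∧ π ω' = π ω := by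
  intro n
  induction n with
  | zero =>
    intro ω hlen
    have : ω = [] := List.length_eq_zero_iff.mp (Nat.le_zero.mp hlen)
    subst this
    exact ⟨[], List.Sublist.refl _, by simp [CoxeterSystem.IsReduced], rfl⟩
  | succ n ih =>
    intro ω hlen
    by_cases hred : cs.IsReduced ω
    · exact ⟨ω, List.Sublist.refl _, hred, rfl⟩
    · have hne : ω ≠ [] := by
        rintro rfl
        exact hred (by simp [CoxeterSystem.IsReduced])
      have hpos : 0 < ω.length := List.length_pos_iff.mpr hne
      classical
      have hj0 : ¬ cs.IsReduced (ω.take (ω.length - 1 + 1)) := by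
        have he : ω.length - 1 + 1 = ω.length := by omega
        rw [he, List.take_length]
        exact hred
      have hex : ∃ j, ¬ cs.IsReduced (ω.take (j+1)) := ⟨ω.length - 1, hj0⟩
      set j := Nat.find hex with hjdef
      have hj : ¬ cs.IsReduced (ω.take (j+1)) := Nat.find_spec hex
      have hjmin : ∀ k, k < j → cs.IsReduced (ω.take (k+1)) := by
        intro k hk
        by_contra hcon
        have h2 : Nat.find hex ≤ k := Nat.find_le hcon
        omega
      have hjle : Nat.find hex ≤ ω.length - 1 := Nat.find_le hj0
      have hjlt : j < ω.length := by omega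
      have hαred : cs.IsReduced (ω.take j) := by
        rcases Nat.eq_zero_or_eq_succ_pred j with h0 | hsucc
        · rw [h0]; simp [CoxeterSystem.IsReduced]
        · rw [hsucc]; exact hjmin (j - 1) (by omega)
      have htake : ω.take (j+1) = ω.take j ++ [ω[j]] := by
        rw [List.take_succ, List.getElem?_eq_getElem hjlt]
        rfl
      have hlentake : (ω.take j).length = j := by
        rw [List.length_take]; omega
      have hℓα : ℓ (π (ω.take j)) = j := by
        rw [hαred, hlentake]
      have hπ1 : π (ω.take (j+1)) = π (ω.take j) * s (ω[j]) := by
        rw [htake, cs.wordProd_append, cs.wordProd_singleton]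
      have hdesc : ℓ (π (ω.take j) * s (ω[j])) < ℓ (π (ω.take j)) := by
        rcases cs.length_mul_simple (π (ω.take j)) (ω[j]) with h | h
        · exfalso
          apply hj
          show ℓ (π (ω.take (j+1))) = (ω.take (j+1)).length
          rw [hπ1, h, hℓα, List.length_take]
          omega
        · omega
      obtain ⟨k, hk, hkerase⟩ :=
        strong_exchange' cs (cs.isReflection_simple (ω[j])) hdesc
      set A := (ω.take j).eraseIdx k with hA
      have hπA : π A = π (ω.take (j+1)) := by rw [hkerase, hπ1]
      set D := ω.drop (j+1) with hD
      have hπ'' : π (A ++ D) = π ω := by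
        rw [cs.wordProd_append, hπA, ← cs.wordProd_append, List.take_append_drop]
      have hsub'' : (A ++ D).Sublist ω := by
        have h1 : A.Sublist (ω.take j) := List.eraseIdx_sublist _ k
        have h2 : (ω.take j).Sublist (ω.take (j+1)) := by
          rw [htake]; exact List.sublist_append_left _ _
        have h3 : (A ++ D).Sublist (ω.take (j+1) ++ D) :=
          List.Sublist.append (h1.trans h2) (List.Sublist.refl D)
        rw [hD, List.take_append_drop] at h3
        exact h3
      have hlen'' : (A ++ D).length ≤ n := by
        rw [List.length_append, hA, hD, List.length_eraseIdx]
        rw [hlentake] at hk ⊢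
        simp only [hk, if_pos]
        rw [List.length_drop]
        omega
      obtain ⟨ρ, hρsub, hρred, hρπ⟩ := ih (A ++ D) hlen''
      exact ⟨ρ, hρsub.trans hsub'', hρred, by rw [hρπ, hπ'']⟩

/-- One step of the Bruhat chain relation. -/
def brS (u w : W) : Prop := ∃ t, cs.IsReflection t ∧ w = u * t ∧ ℓ u < ℓ w

/-- The Bruhat chain order. -/
def brC : W → W → Prop := Relation.ReflTransGen (brS cs)

theorem brC_length_le {u w : W} (h : brC cs u w) : ℓ u ≤ ℓ w := by
  induction h with
  | refl => exact le_refl _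
  | tail _ hstep ih => obtain ⟨t, _, _, hlt⟩ := hstep; omega

/-- chain implies subword of every reduced word. -/
theorem subword_of_chain {u w : W} (h : brC cs u w) :
    ∀ ω : List B, cs.IsReduced ω → π ω = w →
      ∃ ω', ω'.Sublist ω ∧ cs.IsReduced ω' ∧ π ω' = u := by
  induction h with
  | refl => exact fun ω hred hπ => ⟨ω, List.Sublist.refl _, hred, hπ⟩
  | @tail z w' hxz hstep ih =>
    intro ω hred hπ
    obtain ⟨t, htr, rfl, hlt⟩ := hstep
    have hπt : ℓ (π ω * t) < ℓ (π ω) := by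
      rw [hπ, mul_assoc, htr.mul_self, mul_one]
      exact hlt
    obtain ⟨k, hk, hkerase⟩ := strong_exchange' cs htr hπt
    have hz : π (ω.eraseIdx k) = z := by
      rw [hkerase, hπ, mul_assoc, htr.mul_self, mul_one]
    obtain ⟨ρ, hρsub, hρred, hρπ⟩ :=
      exists_reduced_sublist cs (ω.eraseIdx k).length (ω.eraseIdx k) (le_refl _)
    obtain ⟨σ, hσsub, hσred, hσπ⟩ := ih ρ hρred (by rw [hρπ, hz])
    exact ⟨σ, (hσsub.trans hρsub).trans (List.eraseIdx_sublist _ _), hσred, hσπ⟩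

/-- The lemma "L2": if `y ≤ z` in the chain order, `s i` is an ascent of `y` and a
descent of `z`, then `y * s i ≤ z`. -/
theorem chain_L2 {K : ℕ}
    (HM : ∀ (ω ω' : List B), ω.length < K → cs.IsReduced ω → ω'.Sublist ω →
      cs.IsReduced ω' → brC cs (π ω') (π ω))
    {y z : W} {i : B} (hyz : brC cs y z) (hy : ℓ y < ℓ (y * s i))
    (hz : ℓ (z * s i) < ℓ z) (hzK : ℓ z < K) :
    brC cs (y * s i) z := by
  obtain ⟨ρ₀, hρ₀red, hρ₀⟩ := cs.exists_reduced_word' (z * s i)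
  have hπρ : π (ρ₀ ++ [i]) = z := by
    rw [cs.wordProd_append, cs.wordProd_singleton, ← hρ₀,
      cs.simple_mul_simple_cancel_right]
  have hzslen : ℓ (z * s i) + 1 = ℓ z := by
    rcases cs.length_mul_simple z i with h | h
    · omega
    · exact h
  have hρlen : (ρ₀ ++ [i]).length = ℓ z := by
    rw [List.length_append, List.length_singleton, ← hρ₀red, ← hρ₀, hzslen]
  have hρred : cs.IsReduced (ρ₀ ++ [i]) := by
    show ℓ (π (ρ₀ ++ [i])) = _
    rw [hπρ, hρlen]
  obtain ⟨β, hβsub, hβred, hβπ⟩ := subword_of_chain cs hyz (ρ₀ ++ [i]) hρred hπρ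
  have hylen : ℓ (y * s i) = ℓ y + 1 := by
    rcases cs.length_mul_simple y i with h | h
    · exact h
    · omega
  rcases List.sublist_append_iff.mp hβsub with ⟨b₁, b₂, rfl, hb₁, hb₂⟩
  have hKρ : (ρ₀ ++ [i]).length < K := by rw [hρlen]; exact hzK
  rcases List.sublist_singleton.mp hb₂ with rfl | rfl
  · -- β = b₁, last letter not used
    rw [List.append_nil] at hβπ hβred
    have hγsub : (b₁ ++ [i]).Sublist (ρ₀ ++ [i]) :=
      List.Sublist.append hb₁ (List.Sublist.refl _)
    have hγπ : π (b₁ ++ [i]) = y * s i := by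
      rw [cs.wordProd_append, cs.wordProd_singleton, hβπ]
    have hγred : cs.IsReduced (b₁ ++ [i]) := by
      show ℓ (π (b₁ ++ [i])) = _
      rw [hγπ, hylen, List.length_append, List.length_singleton, ← hβred, hβπ]
    have := HM (ρ₀ ++ [i]) (b₁ ++ [i]) hKρ hρred hγsub hγred
    rw [hγπ, hπρ] at this
    exact this
  · -- β = b₁ ++ [i], last letter used
    have hb₁π : π b₁ = y * s i := by
      have : π (b₁ ++ [i]) = π b₁ * s i := by
        rw [cs.wordProd_append, cs.wordProd_singleton]
      rw [this] at hβπ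
      rw [← hβπ, cs.simple_mul_simple_cancel_right]
    have hb₁red : cs.IsReduced b₁ := by
      have := hβred.take b₁.length
      rwa [List.take_left] at this
    have hb₁sub : b₁.Sublist (ρ₀ ++ [i]) :=
      hb₁.trans (List.sublist_append_left _ _)
    have := HM (ρ₀ ++ [i]) b₁ hKρ hρred hb₁sub hb₁red
    rw [hb₁π, hπρ] at this
    exact this

/-- The lifting property for chains. -/
theorem chain_lift {K : ℕ}
    (HM : ∀ (ω ω' : List B), ω.length < K → cs.IsReduced ω → ω'.Sublist ω →
      cs.IsReduced ω' → brC cs (π ω') (π ω))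
    {y : W} {i : B} (hy : ℓ y < ℓ (y * s i)) :
    ∀ {v : W}, brC cs y v → ℓ v ≤ K → ℓ v < ℓ (v * s i) →
      brC cs (y * s i) (v * s i) := by
  intro v hyv
  induction hyv with
  | refl => intro _ _; exact Relation.ReflTransGen.refl
  | @tail z v hxz hstep ih =>
    intro hvK hv
    obtain ⟨t, htr, rfl, hlt⟩ := hstep
    by_cases hzs : ℓ z < ℓ (z * s i)
    · have h1 := ih (by omega) hzs
      refine h1.tail ⟨s i * t * s i, ?_, ?_, ?_⟩
      · have := htr.conj (s i)
        rwa [cs.inv_simple] at this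
      · simp [mul_assoc, cs.simple_mul_simple_cancel_left]
      · have hzs1 : ℓ (z * s i) = ℓ z + 1 := by
          rcases cs.length_mul_simple z i with h | h
          · exact h
          · omega
        omega
    · have hzs' : ℓ (z * s i) < ℓ z := by
        have := cs.length_mul_simple_ne z i
        omega
      have h2 := chain_L2 cs HM hxz hy hzs' (by omega)
      exact (h2.tail ⟨t, htr, rfl, hlt⟩).tail ⟨s i, cs.isReflection_simple i, rfl, hv⟩

/-- Subword implies chain. -/
theorem chain_of_subword : ∀ (n : ℕ) (ω ω' : List B), ω.length ≤ n →
    cs.IsReduced ω → ω'.Sublist ω → cs.IsReduced ω' → brC cs (π ω') (π ω) := by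
  intro n
  induction n with
  | zero =>
    intro ω ω' hlen _ hsub _
    have : ω = [] := List.length_eq_zero_iff.mp (Nat.le_zero.mp hlen)
    subst this
    rw [List.sublist_nil.mp hsub]
    exact Relation.ReflTransGen.refl
  | succ n ih =>
    intro ω ω' hlen hred hsub hred'
    rcases List.eq_nil_or_concat ω with rfl | ⟨α, i, rfl⟩
    · rw [List.sublist_nil.mp hsub]
      exact Relation.ReflTransGen.refl
    · rw [List.concat_eq_append] at *
      have hαred : cs.IsReduced α := by
        have := hred.take α.length
        rwa [List.take_left] at this
      have hαlen : α.length ≤ n := by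
        rw [List.length_append, List.length_singleton] at hlen
        omega
      have hπω : π (α ++ [i]) = π α * s i := by
        rw [cs.wordProd_append, cs.wordProd_singleton]
      have hℓω : ℓ (π α * s i) = α.length + 1 := by
        rw [← hπω, hred, List.length_append, List.length_singleton]
      rcases List.sublist_append_iff.mp hsub with ⟨b₁, b₂, rfl, hb₁, hb₂⟩
      rcases List.sublist_singleton.mp hb₂ with rfl | rfl
      · rw [List.append_nil] at hred' ⊢
        have hc := ih α b₁ hαlen hαred hb₁ hred'
        refine hc.tail ⟨s i, cs.isReflection_simple i, hπω, ?_⟩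
        rw [hπω, hℓω, hαred]
        omega
      · have hb₁red : cs.IsReduced b₁ := by
          have := hred'.take b₁.length
          rwa [List.take_left] at this
        have hc := ih α b₁ hαlen hαred hb₁ hb₁red
        have hπω' : π (b₁ ++ [i]) = π b₁ * s i := by
          rw [cs.wordProd_append, cs.wordProd_singleton]
        have hℓω' : ℓ (π b₁ * s i) = b₁.length + 1 := by
          rw [← hπω', hred', List.length_append, List.length_singleton]
        have HM : ∀ (σ σ' : List B), σ.length < ℓ (π α) → cs.IsReduced σ →
            σ'.Sublist σ → cs.IsReduced σ' → brC cs (π σ') (π σ) := by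
          intro σ σ' hσlen hσred hσsub hσred'
          refine ih σ σ' ?_ hσred hσsub hσred'
          rw [hαred] at hσlen
          omega
        have hlift := chain_lift cs HM (y := π b₁) (i := i)
          (by rw [hℓω', hb₁red]; omega) hc (le_refl _)
          (by rw [hℓω, hαred]; omega)
        rw [hπω, hπω']
        exact hlift

theorem bruhatLE_iff_brC {x w : W} : bruhatLE cs x w ↔ brC cs x w := by
  constructor
  · rintro ⟨ω, hred, hπ, ω', hsub, hred', hπ'⟩
    have := chain_of_subword cs ω.length ω ω' (le_refl _) hred hsub hred'
    rwa [hπ, hπ'] at this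
  · intro h
    obtain ⟨ω, hred, hπ⟩ := cs.exists_reduced_word' w
    obtain ⟨ω', hsub, hred', hπ'⟩ := subword_of_chain cs h ω hred hπ.symm
    exact ⟨ω, hred, hπ.symm, ω', hsub, hred', hπ'⟩

theorem bruhatLE_refl (w : W) : bruhatLE cs w w := by
  obtain ⟨ω, hred, hπ⟩ := cs.exists_reduced_word' w
  exact ⟨ω, hred, hπ.symm, ω, List.Sublist.refl _, hred, hπ.symm⟩

theorem bruhatLE_trans {x w v : W} (h1 : bruhatLE cs x w) (h2 : bruhatLE cs w v) :
    bruhatLE cs x v := by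
  rw [bruhatLE_iff_brC] at *
  exact h1.trans h2

theorem bruhatLT_length_lt {x w : W} (h : bruhatLT cs x w) : ℓ x < ℓ w := by
  obtain ⟨⟨ω, hred, hπ, ω', hsub, hred', hπ'⟩, hne⟩ := h
  have hle : ω'.length ≤ ω.length := hsub.length_le
  have hx : ℓ x = ω'.length := by rw [← hπ', hred']
  have hw : ℓ w = ω.length := by rw [← hπ, hred]
  rcases Nat.lt_or_ge ω'.length ω.length with h | h
  · omega
  · exfalso
    apply hne
    have : ω' = ω := hsub.eq_of_length (by omega)
    rw [← hπ, ← hπ', this]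

/-! ### Laurent polynomial degree bounds -/

/-- `f` is a polynomial in `q` with degree at most `c`. -/
def Bnd (c : ℤ) (f : LaurentPolynomial ℤ) : Prop :=
  ∃ p : Polynomial ℤ, f = p.toLaurent ∧ ∀ i : ℕ, p.coeff i ≠ 0 → (i : ℤ) ≤ c

theorem Bnd_zero (c : ℤ) : Bnd c 0 :=
  ⟨0, by simp, by simp⟩

theorem Bnd_mono {c c' : ℤ} (h : c ≤ c') {f : LaurentPolynomial ℤ} (hf : Bnd c f) :
    Bnd c' f := by
  obtain ⟨p, hp, hdeg⟩ := hf
  exact ⟨p, hp, fun i hi => le_trans (hdeg i hi) h⟩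

theorem Bnd_add {c : ℤ} {f g : LaurentPolynomial ℤ} (hf : Bnd c f) (hg : Bnd c g) :
    Bnd c (f + g) := by
  obtain ⟨p, hp, hpdeg⟩ := hf
  obtain ⟨q, hq, hqdeg⟩ := hg
  refine ⟨p + q, by rw [hp, hq, map_add], fun i hi => ?_⟩
  rw [Polynomial.coeff_add] at hi
  by_cases h1 : p.coeff i = 0
  · exact hqdeg i (by rw [h1, zero_add] at hi; exact hi)
  · exact hpdeg i h1

theorem Bnd_neg {c : ℤ} {f : LaurentPolynomial ℤ} (hf : Bnd c f) : Bnd c (-f) := by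
  obtain ⟨p, hp, hpdeg⟩ := hf
  refine ⟨-p, by rw [hp, map_neg], fun i hi => ?_⟩
  rw [Polynomial.coeff_neg, neg_ne_zero] at hi
  exact hpdeg i hi

theorem Bnd_sub {c : ℤ} {f g : LaurentPolynomial ℤ} (hf : Bnd c f) (hg : Bnd c g) :
    Bnd c (f - g) := by
  rw [sub_eq_add_neg]
  exact Bnd_add hf (Bnd_neg hg)

theorem Bnd_mul {c c' : ℤ} {f g : LaurentPolynomial ℤ} (hf : Bnd c f) (hg : Bnd c' g) :
    Bnd (c + c') (f * g) := by
  obtain ⟨p, hp, hpdeg⟩ := hf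
  obtain ⟨q, hq, hqdeg⟩ := hg
  refine ⟨p * q, by rw [hp, hq, map_mul], fun n hn => ?_⟩
  rw [Polynomial.coeff_mul] at hn
  obtain ⟨⟨i, j⟩, hmem, hne⟩ := Finset.exists_ne_zero_of_sum_ne_zero hn
  have hij : i + j = n := Finset.HasAntidiagonal.mem_antidiagonal.mp hmem
  have hi : p.coeff i ≠ 0 := fun h => hne (by rw [h, zero_mul])
  have hj : q.coeff j ≠ 0 := fun h => hne (by rw [h, mul_zero])
  have := hpdeg i hi
  have := hqdeg j hj
  have : (n : ℤ) = (i : ℤ) + (j : ℤ) := by exact_mod_cast hij.symm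
  omega

theorem Bnd_sign (k : ℕ) : Bnd 0 ((-1 : LaurentPolynomial ℤ) ^ k) := by
  refine ⟨(-1) ^ k, by rw [map_pow, map_neg, map_one], fun i hi => ?_⟩
  have : ((-1 : Polynomial ℤ)) ^ k = Polynomial.C ((-1) ^ k) := by
    rw [map_pow, map_neg, map_one]
  rw [this, Polynomial.coeff_C] at hi
  by_cases h : i = 0
  · rw [h]; exact le_refl _
  · simp [h] at hi

theorem Bnd_sum {c : ℤ} {α : Type*} (t : Finset α) (F : α → LaurentPolynomial ℤ)
    (hF : ∀ a ∈ t, Bnd c (F a)) : Bnd c (∑ a ∈ t, F a) := by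
  classical
  induction t using Finset.induction_on with
  | empty => simpa using Bnd_zero c
  | insert _ _ hnotmem ih =>
    rw [Finset.sum_insert hnotmem]
    exact Bnd_add (hF _ (Finset.mem_insert_self _ _))
      (ih fun a ha => hF a (Finset.mem_insert_of_mem ha))

end BruhatAux

open BruhatAux

/-- let `d ∈ ℤ`, `m : W → ℤ[q,q⁻¹]` finitely supported, and `P : W × W → ℤ[q]` with
`P(w,w) = 1`, `P(x,w) = 0` unless `x ≤ w`, and `deg P(x,w) < (ℓ(w) - ℓ(x))/2` for `x < w`
(expressed coefficientwise).  Set `Tr(x) = Σ_{w ≥ x} (-1)^{ℓ(w)} m(w) P(x,w)`.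
Then for fixed `x`: (`Tr(w)` is a polynomial in `q` of degree `≤ d - ℓ(w)` for all `w ≥ x`) iff
(`m(w)` is a polynomial in `q` of degree `≤ d - ℓ(w)` for all `w ≥ x`).
Here the Laurent variable `T 1` is `q`, and degree bounds are expressed coefficientwise. -/
theorem trace_poly_bound_iff_multiplicity_poly_bound
    (cs : CoxeterSystem M W) (d : ℤ)
    (m : W → LaurentPolynomial ℤ) (hm : (Function.support m).Finite)
    (P : W → W → Polynomial ℤ)
    (hPdiag : ∀ w : W, P w w = 1)
    (hPvanish : ∀ x w : W, ¬ bruhatLE cs x w → P x w = 0)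
    (hPdeg : ∀ x w : W, bruhatLT cs x w →
      ∀ i : ℕ, (P x w).coeff i ≠ 0 → 2 * (i : ℤ) < (cs.length w : ℤ) - cs.length x)
    (Tr : W → LaurentPolynomial ℤ)
    (hTr : ∀ x : W, Tr x = ∑ᶠ w ∈ {w : W | bruhatLE cs x w},
      (-1 : LaurentPolynomial ℤ) ^ cs.length w * m w * (P x w).toLaurent)
    (x : W) :
    (∀ w : W, bruhatLE cs x w → ∃ p : Polynomial ℤ, Tr w = p.toLaurent ∧
      ∀ i : ℕ, p.coeff i ≠ 0 → (i : ℤ) ≤ d - cs.length w) ↔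
    (∀ w : W, bruhatLE cs x w → ∃ p : Polynomial ℤ, m w = p.toLaurent ∧
      ∀ i : ℕ, p.coeff i ≠ 0 → (i : ℤ) ≤ d - cs.length w) := by
  classical
  set F : W → Finset W := fun w => hm.toFinset.filter (fun v => bruhatLT cs w v) with hF
  have key : ∀ w : W, Tr w = (-1 : LaurentPolynomial ℤ) ^ cs.length w * m w +
      ∑ v ∈ F w, (-1 : LaurentPolynomial ℤ) ^ cs.length v * m v * (P w v).toLaurent := by
    intro w
    rw [hTr w]
    have hset : {v : W | bruhatLE cs w v} ∩ Function.support
          (fun v => (-1 : LaurentPolynomial ℤ) ^ cs.length v * m v * (P w v).toLaurent)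
        = ↑(insert w (F w)) ∩ Function.support
          (fun v => (-1 : LaurentPolynomial ℤ) ^ cs.length v * m v * (P w v).toLaurent) := by
      ext v
      simp only [Set.mem_inter_iff, Set.mem_setOf_eq, Function.mem_support,
        Finset.coe_insert, Set.mem_insert_iff, Finset.mem_coe, Finset.mem_filter,
        Set.Finite.mem_toFinset, hF]
      constructor
      · rintro ⟨hle, hne⟩
        refine ⟨?_, hne⟩
        by_cases hvw : v = w
        · exact Or.inl hvw
        · refine Or.inr ⟨?_, hle, fun h => hvw h.symm⟩
          intro hm0
          exact hne (by rw [hm0, mul_zero, zero_mul])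
      · rintro ⟨hv, hne⟩
        refine ⟨?_, hne⟩
        rcases hv with rfl | ⟨-, hlt⟩
        · exact bruhatLE_refl cs v
        · exact hlt.1
    rw [finsum_mem_eq_sum_of_inter_support_eq _ hset]
    have hwnot : w ∉ F w := by
      rw [hF]
      simp only [Finset.mem_filter]
      rintro ⟨-, -, hne⟩
      exact hne rfl
    rw [Finset.sum_insert hwnot, hPdiag w, map_one, mul_one]
  have hsq : ∀ k : ℕ, ((-1 : LaurentPolynomial ℤ) ^ k) * ((-1 : LaurentPolynomial ℤ) ^ k)
      = 1 := by
    intro k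
    rw [← pow_add]
    exact Even.neg_one_pow ⟨k, rfl⟩
  have minv : ∀ w : W, m w = (-1 : LaurentPolynomial ℤ) ^ cs.length w *
      (Tr w - ∑ v ∈ F w, (-1 : LaurentPolynomial ℤ) ^ cs.length v * m v
        * (P w v).toLaurent) := by
    intro w
    rw [key w, add_sub_cancel_right, ← mul_assoc, hsq, one_mul]
  have hPbnd : ∀ w v : W, bruhatLT cs w v →
      Bnd ((cs.length v : ℤ) - cs.length w - 1) ((P w v).toLaurent) := by
    intro w v hlt
    refine ⟨P w v, rfl, fun i hi => ?_⟩
    have := hPdeg w v hlt i hi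
    omega
  have hterm : ∀ w v : W, bruhatLT cs w v → Bnd (d - cs.length v) (m v) →
      Bnd (d - cs.length w)
        ((-1 : LaurentPolynomial ℤ) ^ cs.length v * m v * (P w v).toLaurent) := by
    intro w v hlt hmv
    have h1 := Bnd_mul (Bnd_mul (Bnd_sign (cs.length v)) hmv) (hPbnd w v hlt)
    refine Bnd_mono ?_ h1
    have := bruhatLT_length_lt cs hlt
    omega
  constructor
  · -- Tr bound implies m bound
    intro H
    set N := hm.toFinset.sup (fun v => cs.length v) with hN
    have hNle : ∀ v : W, m v ≠ 0 → cs.length v ≤ N := by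
      intro v hv
      exact Finset.le_sup (f := fun v => cs.length v) (Set.Finite.mem_toFinset hm |>.mpr hv)
    have claim : ∀ k : ℕ, ∀ w : W, bruhatLE cs x w → N < cs.length w + k →
        Bnd (d - cs.length w) (m w) := by
      intro k
      induction k with
      | zero =>
        intro w _ hlt
        have hmw : m w = 0 := by
          by_contra h
          have := hNle w h
          omega
        rw [hmw]
        exact Bnd_zero _
      | succ k ihk =>
        intro w hw hlt
        rw [minv w]
        have hTrBnd : Bnd (d - cs.length w) (Tr w) := H w hw
        have hsumBnd : Bnd (d - cs.length w)
            (∑ v ∈ F w, (-1 : LaurentPolynomial ℤ) ^ cs.length v * m v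
              * (P w v).toLaurent) := by
          refine Bnd_sum _ _ fun v hv => ?_
          rw [hF] at hv
          obtain ⟨hvT, hvlt⟩ := Finset.mem_filter.mp hv
          have hlen := bruhatLT_length_lt cs hvlt
          have hvle : bruhatLE cs x v := bruhatLE_trans cs hw hvlt.1
          exact hterm w v hvlt (ihk v hvle (by omega))
        have := Bnd_mul (Bnd_sign (cs.length w)) (Bnd_sub hTrBnd hsumBnd)
        rw [zero_add] at this
        exact this
    exact fun w hw => claim (N + 1) w hw (by omega)
  · -- m bound implies Tr bound
    intro H w hw
    rw [key w]
    have h1 : Bnd (d - cs.length w)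
        ((-1 : LaurentPolynomial ℤ) ^ cs.length w * m w) := by
      have := Bnd_mul (Bnd_sign (cs.length w)) (H w hw)
      rwa [zero_add] at this
    refine Bnd_add h1 (Bnd_sum _ _ fun v hv => ?_)
    rw [hF] at hv
    obtain ⟨hvT, hvlt⟩ := Finset.mem_filter.mp hv
    exact hterm w v hvlt (H v (bruhatLE_trans cs hw hvlt.1))
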